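/- arXiv:2311.17346 — 5 statements merged into one kernel-verified Lean document; each statement's English description precedes it below -/
import Mathlib

section
/- Let N ≤ L and let x = (x_1 < x_2 < ... < x_N) and y = (y_1 < y_2 < ... < y_N) be two strictly increasing N-tuples of positions in {1,...,L} (configurations of N exclusion particles). Then there exists an index i (a 'flexible particle') such that the closed interval between x_i and y_i contains no position x_j with j ≠ i. -/
namespace Paper

/-- There is a path of exactly `n` moves of `step` from `x` to `y`. -/
def Reaches {C : Type*} (step : C → C → Prop) (x y : C) (n : ℕ) : Prop :=
  ∃ f : ℕ → C, f 0 = x ∧ f n = y ∧ ∀ i < n, step (f i) (f (i + 1))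

/-- Graph distance: minimal number of moves from `x` to `y`. -/
noncomputable def gdist {C : Type*} (step : C → C → Prop) (x y : C) : ℕ :=
  sInf {n | Reaches step x y n}

/-- existence of a flexible particle. -/
theorem exists_flexible_particle (N L : ℕ) (hN : 0 < N) (hNL : N ≤ L)
    (x y : Fin N → ℤ)
    (hx : StrictMono x) (hxb : ∀ i, 1 ≤ x i ∧ x i ≤ (L : ℤ))
    (hy : StrictMono y) (hyb : ∀ i, 1 ≤ y i ∧ y i ≤ (L : ℤ)) :
    ∃ i : Fin N, ∀ j : Fin N, j ≠ i →
      x j ∉ Set.Icc (min (x i) (y i)) (max (x i) (y i)) := by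
  classical
  by_cases h : ∃ i : Fin N, x i ≤ y i
  · obtain ⟨i0, hi0⟩ := h
    set S : Finset (Fin N) := Finset.univ.filter (fun i => x i ≤ y i) with hS
    have hne : S.Nonempty := ⟨i0, by simp [hS, hi0]⟩
    set i := S.max' hne with hidef
    have hiS : i ∈ S := S.max'_mem hne
    have hxy : x i ≤ y i := by simpa [hS] using hiS
    refine ⟨i, fun j hj hmem => ?_⟩
    rw [min_eq_left hxy, max_eq_right hxy] at hmem
    rcases lt_or_gt_of_ne hj with hlt | hgt
    · exact absurd hmem.1 (not_le.2 (hx hlt))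
    · have hjS : j ∈ S := by
        simp only [hS, Finset.mem_filter, Finset.mem_univ, true_and]
        exact le_of_lt (lt_of_le_of_lt hmem.2 (hy hgt))
      exact absurd (S.le_max' j hjS) (not_le.2 hgt)
  · push_neg at h
    refine ⟨⟨0, hN⟩, fun j hj hmem => ?_⟩
    have h0 : y ⟨0, hN⟩ ≤ x ⟨0, hN⟩ := le_of_lt (h _)
    rw [min_eq_right h0, max_eq_left h0] at hmem
    have : (⟨0, hN⟩ : Fin N) < j := by
      rcases lt_or_gt_of_ne hj with hlt | hgt
      · exact absurd hlt (by simp [Fin.lt_def])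
      · exact hgt
    exact absurd hmem.2 (not_le.2 (hx this))

end Paper
end

section
/- Let x and y be two N-element subsets of Z/LZ. Then there exists a cyclic (periodic) interval [a,b] of length ⌊L/2⌋ or ⌊L/2⌋+1 that contains the same number of elements of x as of y. -/
namespace Paper

/-- The cyclic (periodic) interval of length `m` starting at `a` in `ℤ/Lℤ`. -/
def cycInt (L : ℕ) (a : ZMod L) (m : ℕ) : Finset (ZMod L) :=
  (Finset.range m).image fun j : ℕ => a + (j : ZMod L)

lemma mem_cycInt {L : ℕ} {a p : ZMod L} {m : ℕ} :
    p ∈ cycInt L a m ↔ ∃ j < m, p = a + (j : ZMod L) := by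
  simp [cycInt, eq_comm]

lemma cast_inj_of_lt {L : ℕ} {i j : ℕ} (hi : i < L) (hj : j < L)
    (h : (i : ZMod L) = (j : ZMod L)) : i = j := by
  have := congrArg ZMod.val h
  rwa [ZMod.val_natCast_of_lt hi, ZMod.val_natCast_of_lt hj] at this

lemma sum_card_inter {L : ℕ} [NeZero L] (S : Finset (ZMod L)) {m : ℕ} (hm : m ≤ L) :
    ∑ a : ZMod L, (S ∩ cycInt L a m).card = S.card * m := by
  have h1 : ∀ a : ZMod L, (S ∩ cycInt L a m).card
      = ∑ p ∈ S, if p ∈ cycInt L a m then 1 else 0 := by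
    intro a
    rw [← Finset.filter_mem_eq_inter, Finset.card_filter]
  simp_rw [h1]
  rw [Finset.sum_comm]
  have h2 : ∀ p : ZMod L, (∑ a : ZMod L, if p ∈ cycInt L a m then 1 else 0) = m := by
    intro p
    have hfil : Finset.univ.filter (fun a : ZMod L => p ∈ cycInt L a m)
        = (Finset.range m).image (fun j : ℕ => p - (j : ZMod L)) := by
      ext a
      simp only [Finset.mem_filter, Finset.mem_univ, true_and, Finset.mem_image,
        Finset.mem_range, mem_cycInt]
      constructor
      · rintro ⟨j, hj, hp⟩; exact ⟨j, hj, by rw [hp]; ring⟩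
      · rintro ⟨j, hj, rfl⟩; exact ⟨j, hj, by ring⟩
    rw [← Finset.card_filter, hfil, Finset.card_image_of_injOn, Finset.card_range]
    intro i hi j hj hij
    simp only [Finset.coe_range, Set.mem_Iio] at hi hj
    have : (i : ZMod L) = (j : ZMod L) := sub_right_injective hij
    exact cast_inj_of_lt (lt_of_lt_of_le hi hm) (lt_of_lt_of_le hj hm) this
  simp_rw [h2]
  rw [Finset.sum_const, smul_eq_mul]

lemma cycInt_succ {L : ℕ} (a : ZMod L) (m : ℕ) :
    cycInt L a (m+1) = insert (a + (m : ZMod L)) (cycInt L a m) := by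
  simp [cycInt, Finset.range_add_one]

lemma cycInt_succ' {L : ℕ} (a : ZMod L) (m : ℕ) :
    cycInt L a (m+1) = insert a (cycInt L (a+1) m) := by
  ext p
  simp only [mem_cycInt, Finset.mem_insert]
  constructor
  · rintro ⟨j, hj, rfl⟩
    cases j with
    | zero => left; simp
    | succ j' => right; exact ⟨j', by omega, by push_cast; ring⟩
  · rintro (rfl | ⟨j, hj, rfl⟩)
    · exact ⟨0, by omega, by simp⟩
    · exact ⟨j+1, by omega, by push_cast; ring⟩

lemma not_mem_self {L : ℕ} {m : ℕ} (hm : m < L) (a : ZMod L) :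
    a + (m : ZMod L) ∉ cycInt L a m := by
  rw [mem_cycInt]
  rintro ⟨j, hj, h⟩
  exact absurd (cast_inj_of_lt hm (by omega) (add_left_cancel h)) (by omega)

lemma notMem_start {L : ℕ} {m : ℕ} (hm : m < L) (a : ZMod L) :
    a ∉ cycInt L (a+1) m := by
  rw [mem_cycInt]
  rintro ⟨j, hj, h⟩
  have h0 : ((j+1 : ℕ) : ZMod L) = ((0 : ℕ) : ZMod L) := by
    push_cast
    linear_combination -h
  exact absurd (cast_inj_of_lt (by omega) (by omega) h0) (by omega)

lemma card_inter_succ {L : ℕ} (S : Finset (ZMod L)) {m : ℕ} (hm : m < L) (a : ZMod L) :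
    (S ∩ cycInt L a (m+1)).card
      = (S ∩ cycInt L a m).card + (if a + (m : ZMod L) ∈ S then 1 else 0) := by
  rw [cycInt_succ, Finset.inter_comm, Finset.inter_comm S]
  by_cases h : a + (m : ZMod L) ∈ S
  · rw [if_pos h, Finset.insert_inter_of_mem h,
      Finset.card_insert_of_notMem (fun hc => not_mem_self hm a (Finset.mem_of_mem_inter_left hc))]
  · rw [if_neg h, Finset.insert_inter_of_notMem h]; ring

lemma card_inter_succ' {L : ℕ} (S : Finset (ZMod L)) {m : ℕ} (hm : m < L) (a : ZMod L) :
    (S ∩ cycInt L a (m+1)).card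
      = (S ∩ cycInt L (a+1) m).card + (if a ∈ S then 1 else 0) := by
  rw [cycInt_succ', Finset.inter_comm, Finset.inter_comm S]
  by_cases h : a ∈ S
  · rw [if_pos h, Finset.insert_inter_of_mem h,
      Finset.card_insert_of_notMem (fun hc => notMem_start hm a (Finset.mem_of_mem_inter_left hc))]
  · rw [if_neg h, Finset.insert_inter_of_notMem h]; ring

/-- a balanced cyclic interval of length `⌊L/2⌋` or `⌊L/2⌋+1`. -/
theorem exists_balanced_interval (L N : ℕ) (hL : 0 < L)
    (x y : Finset (ZMod L)) (hx : x.card = N) (hy : y.card = N) :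
    ∃ (a : ZMod L) (m : ℕ), (m = L / 2 ∨ m = L / 2 + 1) ∧
      (x ∩ cycInt L a m).card = (y ∩ cycInt L a m).card := by
  classical
  haveI : NeZero L := ⟨hL.ne'⟩
  set m := L / 2 with hmdef
  have hmL : m < L := Nat.div_lt_self hL one_lt_two
  set g : ZMod L → ℤ :=
    fun a => ((x ∩ cycInt L a m).card : ℤ) - ((y ∩ cycInt L a m).card : ℤ) with hg
  by_cases h0 : ∃ a, g a = 0
  · obtain ⟨a, ha⟩ := h0
    refine ⟨a, m, Or.inl rfl, ?_⟩
    have := sub_eq_zero.mp ha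
    exact_mod_cast this
  push_neg at h0
  have hsum : ∑ a : ZMod L, g a = 0 := by
    simp only [hg]
    rw [Finset.sum_sub_distrib]
    have hx' : ∑ a : ZMod L, ((x ∩ cycInt L a m).card : ℤ) = (N * m : ℕ) := by
      rw [← Nat.cast_sum]
      exact_mod_cast congrArg (Nat.cast : ℕ → ℤ) (by rw [sum_card_inter x hmL.le, hx])
    have hy' : ∑ a : ZMod L, ((y ∩ cycInt L a m).card : ℤ) = (N * m : ℕ) := by
      rw [← Nat.cast_sum]
      exact_mod_cast congrArg (Nat.cast : ℕ → ℤ) (by rw [sum_card_inter y hmL.le, hy])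
    rw [hx', hy', sub_self]
  have hne : (Finset.univ : Finset (ZMod L)).Nonempty := Finset.univ_nonempty
  have hpos : ∃ a, 0 < g a := by
    by_contra hc
    push_neg at hc
    have : ∑ a : ZMod L, g a < 0 :=
      Finset.sum_neg (fun a _ => lt_of_le_of_ne (hc a) (h0 a)) hne
    omega
  have hneg : ∃ b, g b < 0 := by
    by_contra hc
    push_neg at hc
    have : 0 < ∑ a : ZMod L, g a :=
      Finset.sum_pos (fun a _ => lt_of_le_of_ne (hc a) (fun h => h0 a h.symm)) hne
    omega
  obtain ⟨a0, ha0⟩ := hpos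
  obtain ⟨b0, hb0⟩ := hneg
  have hreach : ∃ k : ℕ, g (a0 + (k : ZMod L)) < 0 := by
    refine ⟨(b0 - a0).val, ?_⟩
    have : ((((b0 - a0).val : ℕ)) : ZMod L) = b0 - a0 := ZMod.natCast_rightInverse _
    rw [this]
    simpa using hb0
  set k := Nat.find hreach with hkdef
  have hk : g (a0 + (k : ZMod L)) < 0 := Nat.find_spec hreach
  have hk1 : 1 ≤ k := by
    by_contra hc
    push_neg at hc
    interval_cases k
    · simp only [Nat.cast_zero, add_zero] at hk
      omega
  set a := a0 + ((k - 1 : ℕ) : ZMod L) with hadef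
  have haa : a + 1 = a0 + (k : ZMod L) := by
    rw [hadef, add_assoc]
    congr 1
    have h1 : ((k - 1 : ℕ) : ZMod L) + 1 = ((k - 1 + 1 : ℕ) : ZMod L) := by push_cast; ring
    rw [h1, Nat.sub_add_cancel hk1]
  have hga : 0 < g a := by
    have hnot : ¬ g (a0 + ((k - 1 : ℕ) : ZMod L)) < 0 := Nat.find_min hreach (by omega)
    rw [← hadef] at hnot
    have hne' := h0 a
    omega
  have hga1 : g (a + 1) < 0 := by rw [haa]; exact hk
  -- the length-(m+1) interval starting at a is balanced
  set δ : ZMod L → ℤ :=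
    fun p => (if p ∈ x then (1 : ℤ) else 0) - (if p ∈ y then (1 : ℤ) else 0) with hδ
  have hδb : ∀ p, -1 ≤ δ p ∧ δ p ≤ 1 := by
    intro p
    simp only [hδ]
    split_ifs <;> norm_num
  set G : ℤ := ((x ∩ cycInt L a (m+1)).card : ℤ) - ((y ∩ cycInt L a (m+1)).card : ℤ) with hG
  have hG1 : G = g a + δ (a + (m : ZMod L)) := by
    simp only [hG, hg, hδ]
    have h1 := card_inter_succ x hmL a
    have h2 := card_inter_succ y hmL a
    push_cast [h1, h2]
    ring
  have hG2 : G = g (a + 1) + δ a := by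
    simp only [hG, hg, hδ]
    have h1 := card_inter_succ' x hmL a
    have h2 := card_inter_succ' y hmL a
    push_cast [h1, h2]
    ring
  have hGz : G = 0 := by
    have b1 := hδb (a + (m : ZMod L))
    have b2 := hδb a
    omega
  refine ⟨a, m + 1, Or.inr rfl, ?_⟩
  have := sub_eq_zero.mp hGz
  exact_mod_cast this

end Paper
end

section
/- The diameter of the SSEP configuration graph with N particles on L sites and hard-wall boundary conditions equals N(L−N). -/
namespace Paper

/-- A hard-wall SSEP configuration: strictly increasing positions in `{1,…,L}`. -/
def ValidHW (N L : ℕ) (x : Fin N → ℤ) : Prop :=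
  StrictMono x ∧ ∀ i, 1 ≤ x i ∧ x i ≤ (L : ℤ)

/-- A hard-wall SSEP move: one particle moves by `±1`, both endpoints valid
(validity of the target enforces the exclusion rule and the walls). -/
def StepHW (N L : ℕ) (x y : Fin N → ℤ) : Prop :=
  ValidHW N L x ∧ ValidHW N L y ∧
    ∃ i, (y i = x i + 1 ∨ y i = x i - 1) ∧ ∀ j, j ≠ i → y j = x j

/-- Diameter of the hard-wall SSEP configuration graph. -/
noncomputable def diamHW (N L : ℕ) : ℕ :=
  sSup {n | ∃ x y : Fin N → ℤ, ValidHW N L x ∧ ValidHW N L y ∧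
    n = gdist (StepHW N L) x y}

/- ################ Auxiliary lemmas ################ -/

section Aux

variable {N L : ℕ}

private lemma gap {x : Fin N → ℤ} (hx : StrictMono x) :
    ∀ (d : ℕ) (i j : Fin N), j.val = i.val + d → x i + (d : ℤ) ≤ x j := by
  intro d
  induction d with
  | zero =>
    intro i j h
    have : i = j := Fin.ext (by omega)
    subst this; simp
  | succ d ih =>
    intro i j h
    have hk : i.val + d < N := by have := j.isLt; omega
    have h1 := ih i ⟨i.val + d, hk⟩ rfl
    have h2 : x ⟨i.val + d, hk⟩ < x j := hx (by simp [Fin.lt_def]; omega)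
    push_cast at h1 ⊢
    linarith

private lemma lower_bound {x : Fin N → ℤ} (hx : ValidHW N L x) (i : Fin N) :
    (i.val : ℤ) + 1 ≤ x i := by
  have h1 := gap hx.1 i.val ⟨0, i.pos⟩ i (by simp)
  have h2 := (hx.2 ⟨0, i.pos⟩).1
  linarith

private lemma upper_bound {x : Fin N → ℤ} (hx : ValidHW N L x) (i : Fin N) :
    x i ≤ (L : ℤ) - N + 1 + i.val := by
  have hm : N - 1 < N := by have := i.pos; omega
  have h1 := gap hx.1 (N - 1 - i.val) i ⟨N - 1, hm⟩ (by simp; omega)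
  have h2 := (hx.2 ⟨N - 1, hm⟩).2
  have hc : ((N - 1 - i.val : ℕ) : ℤ) = (N : ℤ) - 1 - i.val := by
    have := i.isLt; omega
  rw [hc] at h1
  linarith

private lemma step_sum {x y : Fin N → ℤ} (h : StepHW N L x y) :
    (∑ j, y j) = (∑ j, x j) + 1 ∨ (∑ j, y j) = (∑ j, x j) - 1 := by
  obtain ⟨_, _, i, hi, hj⟩ := h
  have htail : ∑ j ∈ Finset.univ.erase i, y j = ∑ j ∈ Finset.univ.erase i, x j :=
    Finset.sum_congr rfl (fun j hj' => hj j (Finset.ne_of_mem_erase hj'))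
  have hx := Finset.add_sum_erase Finset.univ x (Finset.mem_univ i)
  have hy := Finset.add_sum_erase Finset.univ y (Finset.mem_univ i)
  rcases hi with hi | hi
  · left; rw [← hy, ← hx, htail, hi]; ring
  · right; rw [← hy, ← hx, htail, hi]; ring

private lemma reaches_abs {x y : Fin N → ℤ} {n : ℕ}
    (h : Reaches (StepHW N L) x y n) :
    ((∑ i, y i) - (∑ i, x i)).natAbs ≤ n := by
  induction n generalizing x with
  | zero =>
    obtain ⟨f, h0, hn, _⟩ := h
    rw [← h0, hn]; simp
  | succ n ih =>
    obtain ⟨f, h0, hn, hs⟩ := h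
    have h1 : StepHW N L x (f 1) := h0 ▸ hs 0 (Nat.succ_pos n)
    have h2 : Reaches (StepHW N L) (f 1) y n :=
      ⟨fun k => f (k + 1), rfl, hn, fun i hi => hs (i + 1) (by omega)⟩
    have h3 := ih h2
    have h4 := step_sum h1
    omega

private lemma reaches_cons {C : Type*} {step : C → C → Prop} {x x' y : C} {n : ℕ}
    (h : step x x') (hr : Reaches step x' y n) : Reaches step x y (n + 1) := by
  obtain ⟨f, h0, hn, hs⟩ := hr
  refine ⟨fun k => if k = 0 then x else f (k - 1), by simp, by simp [hn], ?_⟩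
  intro i hi
  match i with
  | 0 => simpa [h0] using h
  | m + 1 => simpa using hs m (by omega)

/-- One improving move exists when `x ≠ y`. -/
private lemma exists_step {x y : Fin N → ℤ}
    (hx : ValidHW N L x) (hy : ValidHW N L y) (hne : x ≠ y) :
    ∃ x', StepHW N L x x' ∧ ValidHW N L x' ∧
      (∑ j, (x' j - y j).natAbs) + 1 = ∑ j, (x j - y j).natAbs := by
  by_cases hlt : ∃ i, x i < y i
  · -- move the rightmost lagging particle to the right
    have hs : (Finset.univ.filter (fun i => x i < y i)).Nonempty := by
      obtain ⟨i, hi⟩ := hlt; exact ⟨i, by simp [hi]⟩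
    set i := (Finset.univ.filter (fun i => x i < y i)).max' hs with hidef
    have hi : x i < y i := by
      have := (Finset.univ.filter (fun i => x i < y i)).max'_mem hs
      simpa using this
    have hmax : ∀ j, i < j → y j ≤ x j := by
      intro j hj
      by_contra hcon
      push_neg at hcon
      have hjmem : j ∈ Finset.univ.filter (fun i => x i < y i) := by simp [hcon]
      exact absurd (Finset.le_max' _ j hjmem) (not_le.mpr hj)
    set x' := Function.update x i (x i + 1) with hx'def
    have hxj : ∀ j, j ≠ i → x' j = x j := fun j hj => Function.update_of_ne hj _ _
    have hxi : x' i = x i + 1 := Function.update_self _ _ _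
    have hmono : StrictMono x' := by
      intro a b hab
      rcases eq_or_ne a i with ha | ha <;> rcases eq_or_ne b i with hb | hb
      · exact absurd (ha.trans hb.symm) (ne_of_lt hab)
      · subst ha
        rw [hxi, hxj b hb]
        have h1 : y i < y b := hy.1 hab
        have h2 : y b ≤ x b := hmax b hab
        omega
      · subst hb
        rw [hxi, hxj a ha]
        have := hx.1 hab
        omega
      · rw [hxj a ha, hxj b hb]; exact hx.1 hab
    have hvalid : ValidHW N L x' := by
      refine ⟨hmono, fun j => ?_⟩
      rcases eq_or_ne j i with hj | hj
      · subst hj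
        rw [hxi]
        have h1 := (hx.2 i).1
        have h2 := (hy.2 i).2
        omega
      · rw [hxj j hj]; exact hx.2 j
    refine ⟨x', ⟨hx, hvalid, i, Or.inl hxi, hxj⟩, hvalid, ?_⟩
    have htail : ∑ j ∈ Finset.univ.erase i, (x' j - y j).natAbs
        = ∑ j ∈ Finset.univ.erase i, (x j - y j).natAbs :=
      Finset.sum_congr rfl (fun j hj' => by rw [hxj j (Finset.ne_of_mem_erase hj')])
    rw [← Finset.add_sum_erase Finset.univ (fun j => (x' j - y j).natAbs)
        (Finset.mem_univ i),
      ← Finset.add_sum_erase Finset.univ (fun j => (x j - y j).natAbs)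
        (Finset.mem_univ i), htail]
    simp only [hxi]
    omega
  · -- move the leftmost leading particle to the left
    push_neg at hlt
    have hgt : ∃ i, y i < x i := by
      by_contra hcon
      push_neg at hcon
      exact hne (funext fun i => le_antisymm (hcon i) (hlt i))
    have hs : (Finset.univ.filter (fun i => y i < x i)).Nonempty := by
      obtain ⟨i, hi⟩ := hgt; exact ⟨i, by simp [hi]⟩
    set i := (Finset.univ.filter (fun i => y i < x i)).min' hs with hidef
    have hi : y i < x i := by
      have := (Finset.univ.filter (fun i => y i < x i)).min'_mem hs
      simpa using this
    have hmin : ∀ j, j < i → x j ≤ y j := by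
      intro j hj
      by_contra hcon
      push_neg at hcon
      have hjmem : j ∈ Finset.univ.filter (fun i => y i < x i) := by simp [hcon]
      exact absurd (Finset.min'_le _ j hjmem) (not_le.mpr hj)
    set x' := Function.update x i (x i - 1) with hx'def
    have hxj : ∀ j, j ≠ i → x' j = x j := fun j hj => Function.update_of_ne hj _ _
    have hxi : x' i = x i - 1 := Function.update_self _ _ _
    have hmono : StrictMono x' := by
      intro a b hab
      rcases eq_or_ne a i with ha | ha <;> rcases eq_or_ne b i with hb | hb
      · exact absurd (ha.trans hb.symm) (ne_of_lt hab)
      · subst ha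
        rw [hxi, hxj b hb]
        have := hx.1 hab
        omega
      · subst hb
        rw [hxi, hxj a ha]
        have h1 : y a < y i := hy.1 hab
        have h2 : x a ≤ y a := hmin a hab
        omega
      · rw [hxj a ha, hxj b hb]; exact hx.1 hab
    have hvalid : ValidHW N L x' := by
      refine ⟨hmono, fun j => ?_⟩
      rcases eq_or_ne j i with hj | hj
      · subst hj
        rw [hxi]
        have h1 := (hy.2 i).1
        have h2 := (hx.2 i).2
        omega
      · rw [hxj j hj]; exact hx.2 j
    refine ⟨x', ⟨hx, hvalid, i, Or.inr hxi, hxj⟩, hvalid, ?_⟩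
    have htail : ∑ j ∈ Finset.univ.erase i, (x' j - y j).natAbs
        = ∑ j ∈ Finset.univ.erase i, (x j - y j).natAbs :=
      Finset.sum_congr rfl (fun j hj' => by rw [hxj j (Finset.ne_of_mem_erase hj')])
    rw [← Finset.add_sum_erase Finset.univ (fun j => (x' j - y j).natAbs)
        (Finset.mem_univ i),
      ← Finset.add_sum_erase Finset.univ (fun j => (x j - y j).natAbs)
        (Finset.mem_univ i), htail]
    simp only [hxi]
    omega

private lemma reaches_D :
    ∀ (n : ℕ) (x y : Fin N → ℤ), ValidHW N L x → ValidHW N L y →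
      (∑ j, (x j - y j).natAbs) = n → Reaches (StepHW N L) x y n := by
  intro n
  induction n with
  | zero =>
    intro x y hx hy hsum
    have hxy : x = y := by
      funext j
      have : (x j - y j).natAbs = 0 := by
        have := Finset.sum_eq_zero_iff.mp hsum j (Finset.mem_univ j)
        exact this
      omega
    exact ⟨fun _ => x, rfl, hxy.symm ▸ rfl, fun i hi => absurd hi (by omega)⟩
  | succ n ih =>
    intro x y hx hy hsum
    have hne : x ≠ y := by
      intro h
      subst h
      simp at hsum
    obtain ⟨x', hstep, hx', hD⟩ := exists_step hx hy hne
    exact reaches_cons hstep (ih x' y hx' hy (by omega))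

private lemma natAbs_le (hNL : N ≤ L) {x y : Fin N → ℤ}
    (hx : ValidHW N L x) (hy : ValidHW N L y) (i : Fin N) :
    (x i - y i).natAbs ≤ L - N := by
  have h1 := lower_bound hx i
  have h2 := upper_bound hx i
  have h3 := lower_bound hy i
  have h4 := upper_bound hy i
  omega

private lemma D_le (hNL : N ≤ L) {x y : Fin N → ℤ}
    (hx : ValidHW N L x) (hy : ValidHW N L y) :
    (∑ j, (x j - y j).natAbs) ≤ N * (L - N) := by
  calc (∑ j, (x j - y j).natAbs) ≤ ∑ _j : Fin N, (L - N) :=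
        Finset.sum_le_sum (fun j _ => natAbs_le hNL hx hy j)
    _ = N * (L - N) := by simp [Finset.sum_const, mul_comm]

private lemma gdist_le (hNL : N ≤ L) {x y : Fin N → ℤ}
    (hx : ValidHW N L x) (hy : ValidHW N L y) :
    gdist (StepHW N L) x y ≤ N * (L - N) :=
  le_trans (Nat.sInf_le (reaches_D _ x y hx hy rfl)) (D_le hNL hx hy)

end Aux

/-- the hard-wall SSEP diameter equals `N (L - N)`. -/
theorem diamHW_eq (N L : ℕ) (hNL : N ≤ L) : diamHW N L = N * (L - N) := by
  -- extremal configurations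
  set x0 : Fin N → ℤ := fun i => (i.val : ℤ) + 1 with hx0def
  set x1 : Fin N → ℤ := fun i => (L : ℤ) - N + 1 + i.val with hx1def
  have hv0 : ValidHW N L x0 := by
    constructor
    · intro a b hab
      simp only [hx0def]
      have : (a.val : ℤ) < b.val := by exact_mod_cast (Fin.lt_def.mp hab)
      omega
    · intro i
      have : (i.val : ℤ) < N := by exact_mod_cast i.isLt
      simp only [hx0def]
      constructor <;> omega
  have hv1 : ValidHW N L x1 := by
    constructor
    · intro a b hab
      simp only [hx1def]
      have : (a.val : ℤ) < b.val := by exact_mod_cast (Fin.lt_def.mp hab)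
      omega
    · intro i
      have h1 : (i.val : ℤ) < N := by exact_mod_cast i.isLt
      have h2 : (N : ℤ) ≤ L := by exact_mod_cast hNL
      simp only [hx1def]
      constructor <;> omega
  have hD01 : (∑ j, (x0 j - x1 j).natAbs) = N * (L - N) := by
    have hterm : ∀ j : Fin N, (x0 j - x1 j).natAbs = L - N := by
      intro j
      have h2 : (N : ℤ) ≤ L := by exact_mod_cast hNL
      simp only [hx0def, hx1def]
      omega
    calc (∑ j, (x0 j - x1 j).natAbs) = ∑ _j : Fin N, (L - N) :=
          Finset.sum_congr rfl (fun j _ => hterm j)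
      _ = N * (L - N) := by simp [Finset.sum_const, mul_comm]
  have hsumdiff : (∑ i, x1 i) - (∑ i, x0 i) = (N * (L - N) : ℕ) := by
    rw [← Finset.sum_sub_distrib]
    have hterm : ∀ j : Fin N, x1 j - x0 j = ((L : ℤ) - N) := by
      intro j; simp only [hx0def, hx1def]; ring
    calc (∑ j, (x1 j - x0 j)) = ∑ _j : Fin N, ((L : ℤ) - N) :=
          Finset.sum_congr rfl (fun j _ => hterm j)
      _ = (N : ℤ) * ((L : ℤ) - N) := by simp [Finset.sum_const, mul_comm]; ring
      _ = (N * (L - N) : ℕ) := by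
          have h2 : (N : ℤ) ≤ L := by exact_mod_cast hNL
          push_cast [Nat.cast_sub hNL]
          ring
  have hgdist : gdist (StepHW N L) x0 x1 = N * (L - N) := by
    have hmem : N * (L - N) ∈ {n | Reaches (StepHW N L) x0 x1 n} :=
      reaches_D _ x0 x1 hv0 hv1 hD01
    refine le_antisymm (Nat.sInf_le hmem) ?_
    have hne : {n | Reaches (StepHW N L) x0 x1 n}.Nonempty := ⟨_, hmem⟩
    have hinf := Nat.sInf_mem hne
    have habs := reaches_abs (N := N) (L := L) hinf
    rw [hsumdiff] at habs
    rw [Int.natAbs_natCast] at habs; exact habs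
  have hmemT : N * (L - N) ∈ {n | ∃ x y : Fin N → ℤ, ValidHW N L x ∧ ValidHW N L y ∧
      n = gdist (StepHW N L) x y} := ⟨x0, x1, hv0, hv1, hgdist.symm⟩
  have hub : ∀ n ∈ {n | ∃ x y : Fin N → ℤ, ValidHW N L x ∧ ValidHW N L y ∧
      n = gdist (StepHW N L) x y}, n ≤ N * (L - N) := by
    rintro n ⟨x, y, hx, hy, rfl⟩
    exact gdist_le hNL hx hy
  exact le_antisymm (csSup_le ⟨_, hmemT⟩ hub) (le_csSup ⟨N * (L - N), hub⟩ hmemT)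

end Paper
end

section
/- In the periodic SSEP with N and L even, N < L, the minimal number of moves from the configuration A = {1,2,...,N} to the configuration A_L = {L/2+1, ..., L/2+N} is at least N(L−N)/2. More precisely, any move sequence from A to A_L requires at least NL/2 − 2k(N−k) moves for some integer k ∈ [1,N], and since k(N−k) ≤ N²/4, this is at least N(L−N)/2. -/
namespace Paper

/-- A periodic SSEP move on `N`-subsets of `ℤ/Lℤ`: one particle hops to an
adjacent empty site (mod `L`). -/
def StepPer (L N : ℕ) (x y : Finset (ZMod L)) : Prop :=
  x.card = N ∧ ∃ p ∈ x, ∃ q : ZMod L, (q = p + 1 ∨ q = p - 1) ∧ q ∉ x ∧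
    y = insert q (x.erase p)

/-- Distance of `z : ZMod L` from `0` along the cycle. -/
def dist0 (L : ℕ) (z : ZMod L) : ℕ := min z.val (L - z.val)

/-- Tent potential centered at `z0`. -/
def pot (L : ℕ) (z0 : ZMod L) (s : Finset (ZMod L)) : ℤ :=
  ∑ z ∈ s, (dist0 L (z - z0) : ℤ)

lemma dist0_lip (L : ℕ) (hL : 1 < L) (w : ZMod L) :
    dist0 L (w + 1) ≤ dist0 L w + 1 ∧ dist0 L w ≤ dist0 L (w + 1) + 1 := by
  haveI : NeZero L := ⟨by omega⟩
  have hv : w.val < L := ZMod.val_lt w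
  have hw1 : (w + 1).val = (w.val + 1) % L := by
    rw [ZMod.val_add]
    have h1 : (1 : ZMod L).val = 1 := by
      have : ((1 : ℕ) : ZMod L).val = 1 := ZMod.val_cast_of_lt hL
      simpa using this
    rw [h1]
  rcases Nat.lt_or_ge (w.val + 1) L with h | h
  · rw [Nat.mod_eq_of_lt h] at hw1
    unfold dist0
    rw [hw1]
    omega
  · have hwl : w.val = L - 1 := by omega
    have : (w.val + 1) % L = 0 := by
      have : w.val + 1 = L := by omega
      simp [this]
    rw [this] at hw1
    unfold dist0
    rw [hw1, hwl]
    omega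

lemma pot_step (L N : ℕ) (hL : 1 < L) (z0 : ZMod L) {x y : Finset (ZMod L)}
    (h : StepPer L N x y) : |pot L z0 y - pot L z0 x| ≤ 1 := by
  obtain ⟨-, p, hp, q, hq, hqx, rfl⟩ := h
  have hqe : q ∉ x.erase p := fun hc => hqx (Finset.mem_of_mem_erase hc)
  have hsum : pot L z0 (insert q (x.erase p)) - pot L z0 x
      = (dist0 L (q - z0) : ℤ) - dist0 L (p - z0) := by
    unfold pot
    rw [Finset.sum_insert hqe, Finset.sum_erase_eq_sub hp]
    ring
  rw [hsum]
  have key : ∀ w : ZMod L, |(dist0 L (w + 1) : ℤ) - dist0 L w| ≤ 1 := by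
    intro w
    have := dist0_lip L hL w
    rw [abs_sub_le_iff]
    constructor <;> omega
  rcases hq with rfl | rfl
  · have e : p + 1 - z0 = (p - z0) + 1 := by ring
    rw [e]; exact key _
  · have e : p - z0 = (p - 1 - z0) + 1 := by ring
    rw [e, abs_sub_comm]; exact key _

lemma pot_reach {C : Type*} (step : C → C → Prop) (Φ : C → ℤ)
    (hstep : ∀ a b, step a b → |Φ b - Φ a| ≤ 1) {x y : C} {n : ℕ}
    (hr : Reaches step x y n) : |Φ y - Φ x| ≤ n := by
  obtain ⟨f, h0, hn, hs⟩ := hr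
  subst h0; subst hn
  have main : ∀ j, j ≤ n → |Φ (f j) - Φ (f 0)| ≤ j := by
    intro j
    induction j with
    | zero => simp
    | succ k ih =>
      intro hk
      have h1 := hstep _ _ (hs k (by omega))
      have h2 := ih (by omega)
      calc |Φ (f (k + 1)) - Φ (f 0)|
          ≤ |Φ (f (k + 1)) - Φ (f k)| + |Φ (f k) - Φ (f 0)| := abs_sub_le _ _ _
        _ ≤ 1 + k := add_le_add h1 h2
        _ = ((k + 1 : ℕ) : ℤ) := by push_cast; ring
  exact main n le_rfl

/-- lower bound for moving the left-packed block `{1,…,N}` to the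
shifted block `{L/2+1,…,L/2+N}` in the periodic SSEP (for `N`, `L` even). -/
theorem periodic_block_shift_lower_bound (N L : ℕ) (hN2 : 2 ∣ N) (hL2 : 2 ∣ L)
    (hN : 0 < N) (hNL : N < L) :
    ∀ n : ℕ, Reaches (StepPer L N)
        ((Finset.range N).image fun j => ((j + 1 : ℕ) : ZMod L))
        ((Finset.range N).image fun j => ((L / 2 + 1 + j : ℕ) : ZMod L)) n →
      (∃ k : ℕ, 1 ≤ k ∧ k ≤ N ∧
          ((N : ℤ) * (L : ℤ)) / 2 - 2 * (k : ℤ) * ((N : ℤ) - (k : ℤ)) ≤ (n : ℤ)) ∧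
      ((N : ℤ) * ((L : ℤ) - (N : ℤ))) / 2 ≤ (n : ℤ) := by
  intro n hr
  obtain ⟨n2, hNn⟩ := hN2
  obtain ⟨m, hLm⟩ := hL2
  have hn2 : 1 ≤ n2 := by omega
  have hn2m : n2 < m := by omega
  have hL1 : 1 < L := by omega
  haveI : NeZero L := ⟨by omega⟩
  set z0 : ZMod L := ((n2 + m : ℕ) : ZMod L) with hz0
  -- potential bound along the path
  have hb := pot_reach (StepPer L N) (pot L z0)
    (fun a b h => pot_step L N hL1 z0 h) hr
  -- value on A
  have hA : pot L z0 ((Finset.range N).image fun j => ((j + 1 : ℕ) : ZMod L))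
      = (n2 : ℤ) * (2 * m) - n2 * n2 := by
    have hinj : ∀ j1 ∈ Finset.range N, ∀ j2 ∈ Finset.range N,
        ((j1 + 1 : ℕ) : ZMod L) = ((j2 + 1 : ℕ) : ZMod L) → j1 = j2 := by
      intro j1 h1 j2 h2 h
      simp only [Finset.mem_range] at h1 h2
      have := congrArg ZMod.val h
      rw [ZMod.val_cast_of_lt (by omega), ZMod.val_cast_of_lt (by omega)] at this
      omega
    unfold pot
    rw [Finset.sum_image hinj]
    have hterm : ∀ j ∈ Finset.range N,
        (dist0 L (((j + 1 : ℕ) : ZMod L) - z0) : ℤ)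
        = if j < n2 then ((m : ℤ) - n2 + 1 + j) else ((m : ℤ) + n2 - 1 - j) := by
      intro j hj
      simp only [Finset.mem_range] at hj
      have harg : ((j + 1 : ℕ) : ZMod L) - z0 = ((j + 1 + (m - n2) : ℕ) : ZMod L) := by
        have h2 : ((j + 1 + (m - n2) : ℕ) : ZMod L) + ((n2 + m : ℕ) : ZMod L)
            = ((j + 1 : ℕ) : ZMod L) := by
          rw [← Nat.cast_add, show (j + 1 + (m - n2)) + (n2 + m) = (j + 1) + L by omega,
            Nat.cast_add, ZMod.natCast_self, add_zero]
        rw [hz0, ← h2]; ring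
      have hval : (((j + 1 + (m - n2) : ℕ)) : ZMod L).val = j + 1 + (m - n2) :=
        ZMod.val_cast_of_lt (by omega)
      rw [harg]
      unfold dist0
      rw [hval, Nat.min_def]
      split_ifs <;> omega
    rw [Finset.sum_congr rfl hterm, show N = n2 + n2 by omega, Finset.sum_range_add]
    have e1 : ∀ j ∈ Finset.range n2,
        (if j < n2 then ((m : ℤ) - n2 + 1 + j) else ((m : ℤ) + n2 - 1 - j))
        = ((m : ℤ) - n2 + 1) + j := by
      intro j hj
      simp only [Finset.mem_range] at hj
      rw [if_pos hj]
    have e2 : ∀ j ∈ Finset.range n2,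
        (if n2 + j < n2 then ((m : ℤ) - n2 + 1 + ((n2 + j : ℕ) : ℤ)) else ((m : ℤ) + n2 - 1 - ((n2 + j : ℕ) : ℤ)))
        = ((m : ℤ) - 1) - j := by
      intro j hj
      rw [if_neg (by omega)]
      push_cast
      ring
    rw [Finset.sum_congr rfl e1, Finset.sum_congr rfl e2]
    rw [Finset.sum_add_distrib, Finset.sum_sub_distrib, Finset.sum_const, Finset.sum_const,
      Finset.card_range]
    -- (cast already normal)
    ring
  -- value on A_L
  have hAL : pot L z0 ((Finset.range N).image fun j => ((L / 2 + 1 + j : ℕ) : ZMod L))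
      = (n2 : ℤ) * n2 := by
    have hL2m : L / 2 = m := by omega
    have hinj : ∀ j1 ∈ Finset.range N, ∀ j2 ∈ Finset.range N,
        ((L / 2 + 1 + j1 : ℕ) : ZMod L) = ((L / 2 + 1 + j2 : ℕ) : ZMod L) → j1 = j2 := by
      intro j1 h1 j2 h2 h
      simp only [Finset.mem_range] at h1 h2
      have h' : ((j1 : ℕ) : ZMod L) = ((j2 : ℕ) : ZMod L) := by
        push_cast at h ⊢
        linear_combination h
      have := congrArg ZMod.val h'
      rw [ZMod.val_cast_of_lt (by omega), ZMod.val_cast_of_lt (by omega)] at this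
      omega
    unfold pot
    rw [Finset.sum_image hinj]
    have hterm : ∀ j ∈ Finset.range N,
        (dist0 L (((L / 2 + 1 + j : ℕ) : ZMod L) - z0) : ℤ)
        = if j < n2 then ((n2 : ℤ) - 1 - j) else ((j : ℤ) + 1 - n2) := by
      intro j hj
      simp only [Finset.mem_range] at hj
      rcases Nat.lt_or_ge (j + 1) n2 with hc | hc
      · -- small j : value n2 - 1 - j, via residue j+1+2m-n2
        have harg : ((L / 2 + 1 + j : ℕ) : ZMod L) - z0
            = ((j + 1 + 2 * m - n2 : ℕ) : ZMod L) := by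
          have h2 : ((j + 1 + 2 * m - n2 : ℕ) : ZMod L) + ((n2 + m : ℕ) : ZMod L)
              = ((L / 2 + 1 + j : ℕ) : ZMod L) := by
            rw [← Nat.cast_add, show (j + 1 + 2 * m - n2) + (n2 + m) = (L / 2 + 1 + j) + L by omega,
              Nat.cast_add, ZMod.natCast_self, add_zero]
          rw [hz0, ← h2]; ring
        have hval : (((j + 1 + 2 * m - n2 : ℕ)) : ZMod L).val = j + 1 + 2 * m - n2 :=
          ZMod.val_cast_of_lt (by omega)
        rw [harg]
        unfold dist0
        rw [hval, Nat.min_def]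
        split_ifs <;> omega
      · -- large j : value j+1-n2
        have harg : ((L / 2 + 1 + j : ℕ) : ZMod L) - z0
            = ((j + 1 - n2 : ℕ) : ZMod L) := by
          have h2 : ((j + 1 - n2 : ℕ) : ZMod L) + ((n2 + m : ℕ) : ZMod L)
              = ((L / 2 + 1 + j : ℕ) : ZMod L) := by
            rw [← Nat.cast_add]
            congr 1
            omega
          rw [hz0, ← h2]; ring
        have hval : (((j + 1 - n2 : ℕ)) : ZMod L).val = j + 1 - n2 :=
          ZMod.val_cast_of_lt (by omega)
        rw [harg]
        unfold dist0
        rw [hval, Nat.min_def]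
        split_ifs <;> omega
    rw [Finset.sum_congr rfl hterm, show N = n2 + n2 by omega, Finset.sum_range_add]
    have e1 : ∀ j ∈ Finset.range n2,
        (if j < n2 then ((n2 : ℤ) - 1 - j) else ((j : ℤ) + 1 - n2))
        = ((n2 : ℤ) - 1) - j := by
      intro j hj
      simp only [Finset.mem_range] at hj
      rw [if_pos hj]
    have e2 : ∀ j ∈ Finset.range n2,
        (if n2 + j < n2 then ((n2 : ℤ) - 1 - ((n2 + j : ℕ) : ℤ)) else (((n2 + j : ℕ) : ℤ) + 1 - n2))
        = ((1 : ℤ)) + j := by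
      intro j hj
      rw [if_neg (by omega)]
      push_cast
      ring
    rw [Finset.sum_congr rfl e1, Finset.sum_congr rfl e2]
    rw [Finset.sum_sub_distrib, Finset.sum_add_distrib, Finset.sum_const, Finset.sum_const,
      Finset.card_range]
    -- (cast already normal)
    ring
  rw [hAL, hA] at hb
  have habs := abs_le.mp hb
  have hNn' : (N : ℤ) = 2 * (n2 : ℤ) := by omega
  have hLm' : (L : ℤ) = 2 * (m : ℤ) := by omega
  have bound : 2 * (n2 : ℤ) * m - 2 * n2 * n2 ≤ (n : ℤ) := by
    have := habs.1
    linarith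
  constructor
  · refine ⟨n2, hn2, by omega, ?_⟩
    have e1 : ((N : ℤ) * (L : ℤ)) / 2 = (n2 : ℤ) * L := by
      rw [show ((N : ℤ) * L) = 2 * ((n2 : ℤ) * L) by rw [hNn']; ring,
        Int.mul_ediv_cancel_left _ two_ne_zero]
    rw [e1]
    have e2 : (n2 : ℤ) * L - 2 * n2 * ((N : ℤ) - n2) = 2 * (n2 : ℤ) * m - 2 * n2 * n2 := by
      rw [hNn', hLm']; ring
    linarith
  · have e3 : (N : ℤ) * ((L : ℤ) - N) = 2 * (2 * (n2 : ℤ) * m - 2 * n2 * n2) := by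
      rw [hNn', hLm']; ring
    rw [e3, Int.mul_ediv_cancel_left _ two_ne_zero]
    exact bound

end Paper
end

section
/- In the lifted TASEP with 1 < N < L particles on a cycle of L sites, the distance from configuration A (particles at sites 1,...,N with the pointer on the particle at site 1) to configuration B (particles at sites L−N+1,...,L with the pointer on the particle at site L−1) is exactly N(L−N) + 2N − 3. -/
namespace Paper

/-- Intermediate state of a lifted-TASEP move: the active particle at `c.2`
advances deterministically if unblocked, otherwise the activity passes to the
blocking particle. -/
def Inter {L : ℕ} (c : Finset (ZMod L) × ZMod L) : Finset (ZMod L) × ZMod L :=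
  if c.2 + 1 ∈ c.1 then (c.1, c.2 + 1) else (insert (c.2 + 1) (c.1.erase c.2), c.2 + 1)

/-- `r` is the particle of `s` immediately preceding position `q` (cyclically). -/
def IsPred {L : ℕ} (s : Finset (ZMod L)) (q r : ZMod L) : Prop :=
  ∃ k : ℕ, 0 < k ∧ r = q - (k : ZMod L) ∧ r ∈ s ∧
    ∀ j : ℕ, 0 < j → j < k → q - (j : ZMod L) ∉ s

/-- A lifted-TASEP move: deterministic advance, then either a forward move
(no further action) or a pullback move (activity to the preceding particle). -/
def LStep {L : ℕ} (c d : Finset (ZMod L) × ZMod L) : Prop :=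
  c.2 ∈ c.1 ∧ (d = Inter c ∨ (d.1 = (Inter c).1 ∧ IsPred (Inter c).1 (Inter c).2 d.2))

section General

variable {C : Type*} {step : C → C → Prop} {x y z : C} {m k : ℕ}

theorem reaches_zero (step : C → C → Prop) (x : C) : Reaches step x x 0 :=
  ⟨fun _ => x, rfl, rfl, by omega⟩

theorem reaches_single (h : step x y) : Reaches step x y 1 := by
  refine ⟨fun i => if i = 0 then x else y, by simp, by simp, ?_⟩
  intro i hi
  interval_cases i
  simpa using h

theorem reaches_trans (h1 : Reaches step x y m) (h2 : Reaches step y z k) :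
    Reaches step x z (m + k) := by
  obtain ⟨f, hf0, hfm, hf⟩ := h1
  obtain ⟨g, hg0, hgk, hg⟩ := h2
  refine ⟨fun i => if i < m then f i else g (i - m), ?_, ?_, ?_⟩
  · by_cases h : 0 < m
    · simp [h, hf0]
    · have hm : m = 0 := by omega
      subst hm
      simpa [hg0, ← hfm] using hf0.symm ▸ rfl
  · have h : ¬ (m + k < m) := by omega
    simp [h, hgk]
  · intro i hi
    by_cases h1 : i + 1 < m
    · have h2 : i < m := by omega
      simpa [h1, h2] using hf i h2
    · by_cases h2 : i < m
      · have hm : i + 1 = m := by omega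
        have heq : g (i + 1 - m) = f (i + 1) := by
          rw [hm]
          simp [hg0, hfm]
        simp only [if_pos h2, if_neg h1]
        rw [heq]
        exact hf i h2
      · have h3 : i - m < k := by omega
        have e : i + 1 - m = i - m + 1 := by omega
        simpa [h1, h2, e] using hg (i - m) h3

end General

section Steps

variable {L : ℕ}

theorem lstep_pass {s : Finset (ZMod L)} {p : ZMod L} (hp : p ∈ s) (hp1 : p + 1 ∈ s) :
    LStep (s, p) (s, p + 1) :=
  ⟨hp, Or.inl (by simp [Inter, hp1])⟩

theorem lstep_adv {s : Finset (ZMod L)} {p : ZMod L} (hp : p ∈ s) (hp1 : p + 1 ∉ s) :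
    LStep (s, p) (insert (p + 1) (s.erase p), p + 1) :=
  ⟨hp, Or.inl (by simp [Inter, hp1])⟩

theorem lstep_adv_pull {s : Finset (ZMod L)} {p r : ZMod L} (hp : p ∈ s) (hp1 : p + 1 ∉ s)
    (hr : IsPred (insert (p + 1) (s.erase p)) (p + 1) r) :
    LStep (s, p) (insert (p + 1) (s.erase p), r) :=
  ⟨hp, Or.inr ⟨by simp [Inter, hp1], by simpa [Inter, hp1] using hr⟩⟩

/-- If the particle set does not change, the active site was blocked. -/
theorem nochange_blocked {c d : Finset (ZMod L) × ZMod L} (h : LStep c d) (heq : d.1 = c.1) :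
    c.2 + 1 ∈ c.1 := by
  by_contra hb
  have hI : (Inter c).1 = insert (c.2 + 1) (c.1.erase c.2) := by simp [Inter, hb]
  have hd1 : d.1 = insert (c.2 + 1) (c.1.erase c.2) := by
    rcases h.2 with h2 | h2
    · rw [h2, hI]
    · rw [h2.1, hI]
  have : c.2 + 1 ∈ c.1 := by
    rw [← heq, hd1]; exact Finset.mem_insert_self _ _
  exact hb this

/-- In a jam (blocked active site), a non-set-changing move either passes or stays. -/
theorem nochange_jam {c d : Finset (ZMod L) × ZMod L} (h : LStep c d) (hb : c.2 + 1 ∈ c.1) :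
    d.2 = c.2 + 1 ∨ d.2 = c.2 := by
  have hI : Inter c = (c.1, c.2 + 1) := by simp [Inter, hb]
  rcases h.2 with h2 | h2
  · left; rw [h2, hI]
  · right
    obtain ⟨k, hk0, hrk, _, hmin⟩ := h2.2
    rw [hI] at hrk hmin
    have hk1 : k = 1 := by
      by_contra hne
      have h1k : 1 < k := by omega
      exact hmin 1 one_pos h1k (by simpa using h.1)
    rw [hrk, hk1]
    simp

/-- A set-changing move is an advance. -/
theorem change_adv {c d : Finset (ZMod L) × ZMod L} (h : LStep c d) (hne : d.1 ≠ c.1) :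
    c.2 ∈ c.1 ∧ c.2 + 1 ∉ c.1 ∧ d.1 = insert (c.2 + 1) (c.1.erase c.2) ∧
      (d.2 = c.2 + 1 ∨ IsPred d.1 (c.2 + 1) d.2) := by
  have hb : c.2 + 1 ∉ c.1 := by
    intro hb
    have hI : Inter c = (c.1, c.2 + 1) := by simp [Inter, hb]
    rcases h.2 with h2 | h2
    · exact hne (by rw [h2, hI])
    · exact hne (by rw [h2.1, hI])
  have hI : Inter c = (insert (c.2 + 1) (c.1.erase c.2), c.2 + 1) := by simp [Inter, hb]
  refine ⟨h.1, hb, ?_, ?_⟩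
  · rcases h.2 with h2 | h2
    · rw [h2, hI]
    · rw [h2.1, hI]
  · rcases h.2 with h2 | h2
    · left; rw [h2, hI]
    · right
      have hd1 : d.1 = insert (c.2 + 1) (c.1.erase c.2) := by rw [h2.1, hI]
      have := h2.2
      rw [hI] at this
      rwa [hd1]

end Steps

end Paper

namespace Paper

section NatWorld

variable {L : ℕ}

/-- Image of a finite set of naturals in `ZMod L`. -/
def nimg (L : ℕ) (W : Finset ℕ) : Finset (ZMod L) := W.image (Nat.cast)

theorem castInj (hL : 0 < L) {a b : ℕ} (ha : 1 ≤ a) (ha2 : a ≤ L) (hb : 1 ≤ b) (hb2 : b ≤ L)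
    (he : (a : ZMod L) = b) : a = b := by
  haveI : NeZero L := ⟨by omega⟩
  have h := congrArg ZMod.val he
  rw [ZMod.val_natCast, ZMod.val_natCast] at h
  rcases eq_or_lt_of_le ha2 with h1 | h1 <;> rcases eq_or_lt_of_le hb2 with h2 | h2 <;>
    simp [h1, h2, Nat.mod_eq_of_lt] at h <;> omega

theorem mem_nimg (hL : 0 < L) {W : Finset ℕ} (hW : W ⊆ Finset.Icc 1 L) {m : ℕ}
    (hm1 : 1 ≤ m) (hm2 : m ≤ L) : ((m : ℕ) : ZMod L) ∈ nimg L W ↔ m ∈ W := by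
  constructor
  · rintro h
    obtain ⟨b, hbW, hbe⟩ := Finset.mem_image.1 h
    have hb := Finset.mem_Icc.1 (hW hbW)
    rwa [castInj hL hb.1 hb.2 hm1 hm2 hbe] at hbW
  · intro h
    exact Finset.mem_image.2 ⟨m, h, rfl⟩

theorem nimg_erase (hL : 0 < L) {W : Finset ℕ} (hW : W ⊆ Finset.Icc 1 L) {a : ℕ}
    (ha : 1 ≤ a) (ha2 : a ≤ L) :
    nimg L (W.erase a) = (nimg L W).erase ((a : ℕ) : ZMod L) := by
  ext x
  simp only [nimg, Finset.mem_image, Finset.mem_erase]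
  constructor
  · rintro ⟨b, hb, rfl⟩
    have hbb := Finset.mem_Icc.1 (hW hb.2)
    exact ⟨fun h => hb.1 (castInj hL hbb.1 hbb.2 ha ha2 h), b, hb.2, rfl⟩
  · rintro ⟨hxa, b, hbW, rfl⟩
    exact ⟨b, ⟨fun h => hxa (by rw [h]), hbW⟩, rfl⟩

theorem nimg_insert {W : Finset ℕ} {a : ℕ} :
    nimg L (insert a W) = insert ((a : ℕ) : ZMod L) (nimg L W) :=
  Finset.image_insert _ _ _

theorem nstep_pass (hL : 0 < L) {W : Finset ℕ} (hW : W ⊆ Finset.Icc 1 L) {p : ℕ}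
    (hp : p ∈ W) (hp1 : p + 1 ∈ W) :
    LStep (nimg L W, ((p : ℕ) : ZMod L)) (nimg L W, ((p + 1 : ℕ) : ZMod L)) := by
  have hpb := Finset.mem_Icc.1 (hW hp)
  have hpb1 := Finset.mem_Icc.1 (hW hp1)
  have e : ((p + 1 : ℕ) : ZMod L) = ((p : ℕ) : ZMod L) + 1 := by push_cast; ring
  rw [e]
  exact lstep_pass ((mem_nimg hL hW hpb.1 hpb.2).2 hp)
    (by rw [← e]; exact (mem_nimg hL hW hpb1.1 hpb1.2).2 hp1)

theorem nstep_adv (hL : 0 < L) {W : Finset ℕ} (hW : W ⊆ Finset.Icc 1 L) {p : ℕ}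
    (hp : p ∈ W) (hp1 : p + 1 ∉ W) (hple : p + 1 ≤ L) :
    LStep (nimg L W, ((p : ℕ) : ZMod L))
      (nimg L (insert (p + 1) (W.erase p)), ((p + 1 : ℕ) : ZMod L)) := by
  have hpb := Finset.mem_Icc.1 (hW hp)
  have e : ((p + 1 : ℕ) : ZMod L) = ((p : ℕ) : ZMod L) + 1 := by push_cast; ring
  have hset : nimg L (insert (p + 1) (W.erase p)) =
      insert (((p : ℕ) : ZMod L) + 1) ((nimg L W).erase ((p : ℕ) : ZMod L)) := by
    rw [nimg_insert, nimg_erase hL hW hpb.1 hpb.2, e]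
  rw [hset, e]
  exact lstep_adv ((mem_nimg hL hW hpb.1 hpb.2).2 hp)
    (by rw [← e]; exact fun h => hp1 ((mem_nimg hL hW (by omega) hple).1 h))

theorem nstep_adv_pull (hL : 0 < L) {W : Finset ℕ} (hW : W ⊆ Finset.Icc 1 L) {p r kk : ℕ}
    (hp : p ∈ W) (hp1 : p + 1 ∉ W) (hple : p + 1 ≤ L)
    (hr1 : 1 ≤ r) (hrp : r + kk = p + 1) (hkk : 0 < kk)
    (hrW : r ∈ insert (p + 1) (W.erase p))
    (hmid : ∀ j, 0 < j → j < kk → (p + 1 - j) ∉ insert (p + 1) (W.erase p)) :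
    LStep (nimg L W, ((p : ℕ) : ZMod L))
      (nimg L (insert (p + 1) (W.erase p)), ((r : ℕ) : ZMod L)) := by
  have hpb := Finset.mem_Icc.1 (hW hp)
  have e : ((p + 1 : ℕ) : ZMod L) = ((p : ℕ) : ZMod L) + 1 := by push_cast; ring
  have hW' : insert (p + 1) (W.erase p) ⊆ Finset.Icc 1 L := by
    intro x hx
    rcases Finset.mem_insert.1 hx with h | h
    · exact Finset.mem_Icc.2 ⟨by omega, by omega⟩
    · exact hW (Finset.erase_subset _ _ h)
  have hset : nimg L (insert (p + 1) (W.erase p)) =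
      insert (((p : ℕ) : ZMod L) + 1) ((nimg L W).erase ((p : ℕ) : ZMod L)) := by
    rw [nimg_insert, nimg_erase hL hW hpb.1 hpb.2, e]
  have hpred : IsPred (nimg L (insert (p + 1) (W.erase p)))
      (((p + 1 : ℕ) : ZMod L)) ((r : ℕ) : ZMod L) := by
    refine ⟨kk, hkk, ?_, ?_, ?_⟩
    · rw [eq_sub_iff_add_eq, ← Nat.cast_add, hrp]
    · exact (mem_nimg hL hW' hr1 (by omega)).2 hrW
    · intro j hj0 hjk
      have hsub : ((p + 1 : ℕ) : ZMod L) - ((j : ℕ) : ZMod L) = ((p + 1 - j : ℕ) : ZMod L) := by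
        rw [eq_comm, Nat.cast_sub (by omega)]
      rw [hsub]
      intro hmem
      exact hmid j hj0 hjk ((mem_nimg hL hW' (by omega) (by omega)).1 hmem)
  rw [hset]
  rw [hset, e] at hpred
  exact lstep_adv_pull ((mem_nimg hL hW hpb.1 hpb.2).2 hp)
    (by rw [← e]; exact fun h => hp1 ((mem_nimg hL hW (by omega) hple).1 h))
    hpred

theorem run_free (hL : 0 < L) {W : Finset ℕ} (hW : W ⊆ Finset.Icc 1 L) (a : ℕ) (d : ℕ)
    (ha : 1 ≤ a) (had : a + d ≤ L) (hfree : ∀ m, a ≤ m → m ≤ a + d → m ∉ W) :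
    Reaches (LStep (L := L)) (nimg L (insert a W), ((a : ℕ) : ZMod L))
      (nimg L (insert (a + d) W), ((a + d : ℕ) : ZMod L)) d := by
  induction d with
  | zero => exact reaches_zero _ _
  | succ d ih =>
    have h1 := ih (by omega) (fun m h1 h2 => hfree m h1 (by omega))
    have hWins : insert (a + d) W ⊆ Finset.Icc 1 L := by
      intro x hx
      rcases Finset.mem_insert.1 hx with h | h
      · exact Finset.mem_Icc.2 ⟨by omega, by omega⟩
      · exact hW h
    have hstep := nstep_adv hL (W := insert (a + d) W) hWins
      (Finset.mem_insert_self _ _)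
      (by
        intro hmem
        rcases Finset.mem_insert.1 hmem with h | h
        · omega
        · exact hfree (a + d + 1) (by omega) (by omega) h)
      (by omega)
    have hseteq : insert (a + d + 1) ((insert (a + d) W).erase (a + d)) = insert (a + d + 1) W := by
      rw [Finset.erase_insert (fun h => hfree (a + d) (by omega) (by omega) h)]
    rw [hseteq] at hstep
    have : Reaches (LStep (L := L)) (nimg L (insert a W), ((a : ℕ) : ZMod L))
        (nimg L (insert (a + d + 1) W), ((a + d + 1 : ℕ) : ZMod L)) (d + 1) :=
      reaches_trans h1 (reaches_single hstep)
    simpa [show a + (d + 1) = a + d + 1 by omega] using this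

theorem passes_jam (hL : 0 < L) {W : Finset ℕ} (hW : W ⊆ Finset.Icc 1 L) (a : ℕ) (d : ℕ)
    (hmem : ∀ m, a ≤ m → m ≤ a + d → m ∈ W) :
    Reaches (LStep (L := L)) (nimg L W, ((a : ℕ) : ZMod L))
      (nimg L W, ((a + d : ℕ) : ZMod L)) d := by
  induction d with
  | zero => exact reaches_zero _ _
  | succ d ih =>
    have h1 := ih (fun m h1 h2 => hmem m h1 (by omega))
    have hstep := nstep_pass hL hW (hmem (a + d) (by omega) (by omega))
      (hmem (a + d + 1) (by omega) (by omega))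
    have : Reaches (LStep (L := L)) (nimg L W, ((a : ℕ) : ZMod L))
        (nimg L W, ((a + d + 1 : ℕ) : ZMod L)) (d + 1) :=
      reaches_trans h1 (reaches_single hstep)
    simpa [show a + (d + 1) = a + d + 1 by omega] using this

end NatWorld

section Upper

variable {N L : ℕ}

/-- The set occupied while particles `k+1, …, N` have finished their runs. -/
def Wk (N L κ : ℕ) : Finset ℕ := Finset.Icc 1 (κ - 1) ∪ Finset.Icc (L - N + κ + 1) L

theorem Wk_subset (hNL : N < L) (κ : ℕ) (hκ : κ ≤ N) : Wk N L κ ⊆ Finset.Icc 1 L := by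
  intro x hx
  rcases Finset.mem_union.1 hx with h | h <;> rw [Finset.mem_Icc] at * <;>
    constructor <;> omega

theorem runs (hN : 1 < N) (hNL : N < L) : ∀ k, k + 1 ≤ N →
    Reaches (LStep (L := L)) (nimg L (insert (k + 1) (Wk N L (k + 1))), ((k + 1 : ℕ) : ZMod L))
      (nimg L (Finset.Icc (L - N + 1) L), ((L - N + 1 : ℕ) : ZMod L)) ((k + 1) * (L - N)) := by
  have hL : 0 < L := by omega
  intro k
  induction k with
  | zero =>
    intro _
    have h := run_free hL (W := Wk N L 1) (Wk_subset hNL 1 (by omega)) 1 (L - N) (by omega) (by omega)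
      (by
        intro m h1 h2 hmem
        rcases Finset.mem_union.1 hmem with h | h <;> rw [Finset.mem_Icc] at h <;> omega)
    have hset : insert (1 + (L - N)) (Wk N L 1) = Finset.Icc (L - N + 1) L := by
      ext x
      simp only [Wk, Finset.mem_insert, Finset.mem_union, Finset.mem_Icc]
      omega
    have hptr : (1 + (L - N)) = L - N + 1 := by omega
    rw [hset, hptr] at h
    simpa using h
  | succ k ih =>
    intro hk1
    have ihh := ih (by omega)
    -- particle κ = k + 2 runs L - N - 1 free advances, then one advance with pullback to k + 1
    set κ := k + 2 with hκ
    have hWsub := Wk_subset hNL κ (by omega)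
    have h1 := run_free hL (W := Wk N L κ) hWsub κ (L - N - 1) (by omega) (by omega)
      (by
        intro m h1 h2 hmem
        rcases Finset.mem_union.1 hmem with h | h <;> rw [Finset.mem_Icc] at h <;> omega)
    -- the advance-with-pullback step
    have hp : κ + (L - N - 1) ∈ insert (κ + (L - N - 1)) (Wk N L κ) := Finset.mem_insert_self _ _
    have hWsub2 : insert (κ + (L - N - 1)) (Wk N L κ) ⊆ Finset.Icc 1 L := by
      intro x hx
      rcases Finset.mem_insert.1 hx with h | h
      · exact Finset.mem_Icc.2 ⟨by omega, by omega⟩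
      · exact hWsub h
    have hnotmem : ∀ m, κ ≤ m → m ≤ κ + (L - N) → m ∉ Wk N L κ := by
      intro m h1 h2 hmem
      rcases Finset.mem_union.1 hmem with h | h <;> rw [Finset.mem_Icc] at h <;> omega
    have hstep := nstep_adv_pull hL (W := insert (κ + (L - N - 1)) (Wk N L κ)) hWsub2
      (p := κ + (L - N - 1)) (r := k + 1) (kk := L - N + 1)
      hp
      (by
        intro hmem
        rcases Finset.mem_insert.1 hmem with h | h
        · omega
        · exact hnotmem _ (by omega) (by omega) h)
      (by omega) (by omega) (by omega) (by omega)
      (by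
        refine Finset.mem_insert.2 (Or.inr ?_)
        refine Finset.mem_erase.2 ⟨by omega, ?_⟩
        refine Finset.mem_insert.2 (Or.inr ?_)
        exact Finset.mem_union.2 (Or.inl (Finset.mem_Icc.2 ⟨by omega, by omega⟩)))
      (by
        intro j hj0 hjk hmem
        rcases Finset.mem_insert.1 hmem with h | h
        · omega
        · have h2 := Finset.mem_erase.1 h
          rcases Finset.mem_insert.1 h2.2 with h3 | h3
          · exact h2.1 (by omega)
          · exact hnotmem _ (by omega) (by omega) h3)
    -- identify the resulting set with the next stage
    have hseteq : insert (κ + (L - N - 1) + 1)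
        ((insert (κ + (L - N - 1)) (Wk N L κ)).erase (κ + (L - N - 1))) =
        insert (k + 1) (Wk N L (k + 1)) := by
      rw [Finset.erase_insert (hnotmem _ (by omega) (by omega))]
      ext x
      simp only [Wk, Finset.mem_insert, Finset.mem_union, Finset.mem_Icc]
      omega
    rw [hseteq] at hstep
    have hchain := reaches_trans (reaches_trans h1 (reaches_single hstep)) ihh
    have hcount : L - N - 1 + 1 + (k + 1) * (L - N) = (k + 1 + 1) * (L - N) := by
      have h2 : L - N - 1 + 1 = L - N := by omega
      rw [h2]
      generalize L - N = D
      ring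
    rw [hcount] at hchain
    exact hchain

theorem upper (hN : 1 < N) (hNL : N < L) :
    Reaches (LStep (L := L)) (nimg L (Finset.Icc 1 N), ((1 : ℕ) : ZMod L))
      (nimg L (Finset.Icc (L - N + 1) L), ((L - 1 : ℕ) : ZMod L))
      (N * (L - N) + 2 * N - 3) := by
  have hL : 0 < L := by omega
  have hsub : Finset.Icc 1 N ⊆ Finset.Icc 1 L := by
    intro x hx; rw [Finset.mem_Icc] at *; omega
  -- Phase 1: N - 1 passes
  have h1 := passes_jam hL hsub 1 (N - 1)
    (fun m h1 h2 => Finset.mem_Icc.2 ⟨by omega, by omega⟩)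
  -- Phase 2: the runs
  have h2 := runs hN hNL (N - 1) (by omega)
  have hA : insert (N - 1 + 1) (Wk N L (N - 1 + 1)) = Finset.Icc 1 N := by
    ext x
    simp only [Wk, Finset.mem_insert, Finset.mem_union, Finset.mem_Icc]
    omega
  rw [hA] at h2
  have hptr2 : N - 1 + 1 = N := by omega
  rw [hptr2] at h2
  have hptr1 : 1 + (N - 1) = N := by omega
  rw [hptr1] at h1
  -- Phase 3: N - 2 passes at the end
  have hsub2 : Finset.Icc (L - N + 1) L ⊆ Finset.Icc 1 L := by
    intro x hx; rw [Finset.mem_Icc] at *; omega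
  have h3 := passes_jam hL hsub2 (L - N + 1) (N - 2)
    (fun m hm1 hm2 => Finset.mem_Icc.2 ⟨by omega, by omega⟩)
  have hptr3 : L - N + 1 + (N - 2) = L - 1 := by omega
  rw [hptr3] at h3
  have hchain := reaches_trans (reaches_trans h1 h2) h3
  have hcount : N - 1 + N * (L - N) + (N - 2) = N * (L - N) + 2 * N - 3 := by
    generalize N * (L - N) = P
    omega
  rw [hcount] at hchain
  exact hchain

end Upper

section Lower

variable {N L : ℕ}

def phi (L : ℕ) (x : ZMod L) : ℕ := (L - x.val) % L

def F (L : ℕ) (s : Finset (ZMod L)) : ℕ := s.sum (phi L)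

theorem phi_le (hL : 0 < L) (q : ZMod L) : phi L q ≤ phi L (q + 1) + 1 := by
  haveI : NeZero L := ⟨by omega⟩
  have hv : q.val < L := ZMod.val_lt q
  have hq : ((q.val : ℕ) : ZMod L) = q := ZMod.natCast_rightInverse q
  have hval : (q + 1).val = (q.val + 1) % L := by
    conv_lhs => rw [← hq]
    rw [show ((q.val : ℕ) : ZMod L) + 1 = ((q.val + 1 : ℕ) : ZMod L) by push_cast; ring]
    exact ZMod.val_natCast _ _
  rw [phi, phi, hval]
  rcases Nat.lt_or_ge (q.val + 1) L with h | h
  · rw [Nat.mod_eq_of_lt h]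
    rcases Nat.eq_zero_or_pos q.val with h0 | h0
    · rw [h0]; simp
    · rw [Nat.mod_eq_of_lt (by omega), Nat.mod_eq_of_lt (by omega)]
      omega
  · have hvL : q.val + 1 = L := by omega
    rw [hvL, Nat.mod_self, Nat.sub_zero, Nat.mod_self]
    have h1 : L - q.val = 1 := by omega
    rw [h1]
    exact le_trans (Nat.mod_le _ _) (by omega)

theorem F_advance (hL : 0 < L) {s : Finset (ZMod L)} {q : ZMod L} (hq : q ∈ s) (hq1 : q + 1 ∉ s) :
    F L s ≤ F L (insert (q + 1) (s.erase q)) + 1 := by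
  have h1 : F L (insert (q + 1) (s.erase q)) = phi L (q + 1) + F L (s.erase q) :=
    Finset.sum_insert (fun h => hq1 (Finset.mem_of_mem_erase h))
  have h2 : F L s = phi L q + F L (s.erase q) := (Finset.add_sum_erase s (phi L) hq).symm
  have h3 := phi_le hL q
  omega

theorem phi_cast (hL : 0 < L) {m : ℕ} (hm1 : 1 ≤ m) (hm2 : m ≤ L) :
    phi L ((m : ℕ) : ZMod L) = L - m := by
  haveI : NeZero L := ⟨by omega⟩
  rw [phi, ZMod.val_natCast]
  rcases eq_or_lt_of_le hm2 with h | h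
  · rw [h, Nat.mod_self]
    simp
  · rw [Nat.mod_eq_of_lt h, Nat.mod_eq_of_lt (by omega)]

theorem F_Icc (hL : 0 < L) {a b : ℕ} (ha : 1 ≤ a) (hb : b ≤ L) :
    F L (nimg L (Finset.Icc a b)) = ∑ m ∈ Finset.Icc a b, (L - m) := by
  rw [F, nimg, Finset.sum_image]
  · apply Finset.sum_congr rfl
    intro m hm
    rw [Finset.mem_Icc] at hm
    exact phi_cast hL (by omega) (by omega)
  · intro x hx y hy hxy
    rw [Finset.mem_coe, Finset.mem_Icc] at hx hy
    exact castInj hL (by omega) (by omega) (by omega) (by omega) hxy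

theorem F_diff (hN : 1 < N) (hNL : N < L) :
    F L (nimg L (Finset.Icc 1 N)) = F L (nimg L (Finset.Icc (L - N + 1) L)) + N * (L - N) := by
  have hL : 0 < L := by omega
  rw [F_Icc hL (by omega) (by omega), F_Icc hL (by omega) (by omega)]
  have hre : Finset.Icc (L - N + 1) L = Finset.image (fun m => m + (L - N)) (Finset.Icc 1 N) := by
    ext x
    simp only [Finset.mem_Icc, Finset.mem_image]
    constructor
    · intro h
      exact ⟨x - (L - N), by omega, by omega⟩
    · rintro ⟨m, hm, rfl⟩
      omega
  rw [hre, Finset.sum_image (by intro x hx y hy h; dsimp only at h; omega)]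
  have hcg : ∀ m ∈ Finset.Icc 1 N, L - m = (L - (m + (L - N))) + (L - N) := by
    intro m hm
    rw [Finset.mem_Icc] at hm
    omega
  rw [Finset.sum_congr rfl hcg, Finset.sum_add_distrib, Finset.sum_const, Nat.card_Icc,
    smul_eq_mul]
  have he : N + 1 - 1 = N := by omega
  rw [he]

theorem lower (hN : 1 < N) (hNL : N < L) {n : ℕ}
    (h : Reaches (LStep (L := L)) (nimg L (Finset.Icc 1 N), ((1 : ℕ) : ZMod L))
      (nimg L (Finset.Icc (L - N + 1) L), ((L - 1 : ℕ) : ZMod L)) n) :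
    N * (L - N) + 2 * N - 3 ≤ n := by
  classical
  have hL : 0 < L := by omega
  obtain ⟨f, hf0, hfn, hstep⟩ := h
  set A1 := nimg L (Finset.Icc 1 N) with hA1
  set B1 := nimg L (Finset.Icc (L - N + 1) L) with hB1
  have hsubA : Finset.Icc 1 N ⊆ Finset.Icc 1 L := by
    intro x hx; rw [Finset.mem_Icc] at *; omega
  have hsubB : Finset.Icc (L - N + 1) L ⊆ Finset.Icc 1 L := by
    intro x hx; rw [Finset.mem_Icc] at *; omega
  have hf01 : (f 0).1 = A1 := by rw [hf0]
  have hf02 : (f 0).2 = ((1 : ℕ) : ZMod L) := by rw [hf0]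
  have hfn1 : (f n).1 = B1 := by rw [hfn]
  have hfn2 : (f n).2 = ((L - 1 : ℕ) : ZMod L) := by rw [hfn]
  set P : ℕ → Prop := fun i => (f (i + 1)).1 ≠ (f i).1 with hP
  set chg : Finset ℕ := (Finset.range n).filter P with hchg
  -- potential bound: the number of set-changing moves is at least N (L - N)
  have key : ∀ m, m ≤ n → F L (f 0).1 ≤ F L (f m).1 + ((Finset.range m).filter P).card := by
    intro m
    induction m with
    | zero => intro _; simp
    | succ m ih =>
      intro hm
      have ihm := ih (by omega)
      by_cases hPm : P m
      · have hadv := change_adv (hstep m (by omega)) hPm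
        have hF := F_advance hL hadv.1 hadv.2.1
        rw [← hadv.2.2.1] at hF
        have hcard : ((Finset.range (m + 1)).filter P).card
            = ((Finset.range m).filter P).card + 1 := by
          rw [Finset.range_add_one, Finset.filter_insert, if_pos hPm,
            Finset.card_insert_of_notMem (by simp)]
        omega
      · have heq : (f (m + 1)).1 = (f m).1 := not_not.1 hPm
        have hFeq : F L (f (m + 1)).1 = F L (f m).1 := by rw [heq]
        have hcard : ((Finset.range (m + 1)).filter P).card
            = ((Finset.range m).filter P).card := by
          rw [Finset.range_add_one, Finset.filter_insert, if_neg hPm]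
        omega
  have hchg_card : N * (L - N) ≤ chg.card := by
    have hk := key n le_rfl
    rw [hf01, hfn1, ← hchg] at hk
    have hd := F_diff hN hNL
    rw [← hA1, ← hB1] at hd
    omega
  have hne : chg.Nonempty := by
    rw [← Finset.card_pos]
    have h1 : 0 < N * (L - N) := Nat.mul_pos (by omega) (by omega)
    omega
  set T := chg.min' hne with hT
  set S := chg.max' hne with hS
  have hTmem : T ∈ chg := chg.min'_mem hne
  have hSmem : S ∈ chg := chg.max'_mem hne
  have hTS : T ≤ S := chg.min'_le _ hSmem
  have hTn : T < n := Finset.mem_range.1 (Finset.mem_filter.1 hTmem).1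
  have hSn : S < n := Finset.mem_range.1 (Finset.mem_filter.1 hSmem).1
  have hTP : P T := (Finset.mem_filter.1 hTmem).2
  have hSP : P S := (Finset.mem_filter.1 hSmem).2
  -- prefix: the set is A1 up to time T
  have pre_set : ∀ i, i ≤ T → (f i).1 = A1 := by
    intro i
    induction i with
    | zero => intro _; exact hf01
    | succ i ih =>
      intro hi
      have hPi : ¬ P i := by
        intro hPi
        have := chg.min'_le i (Finset.mem_filter.2 ⟨Finset.mem_range.2 (by omega), hPi⟩)
        omega
      have heq : (f (i + 1)).1 = (f i).1 := not_not.1 hPi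
      rw [heq, ih (by omega)]
  -- prefix pointer
  have pre_ptr : ∀ i, i ≤ T →
      ∃ c, c ≤ i ∧ 1 + c ≤ N ∧ (f i).2 = ((1 + c : ℕ) : ZMod L) := by
    intro i
    induction i with
    | zero => intro _; exact ⟨0, le_rfl, by omega, by rw [hf02]⟩
    | succ i ih =>
      intro hi
      obtain ⟨c, hc1, hc2, hc3⟩ := ih (by omega)
      have hPi : ¬ P i := by
        intro hPi
        have := chg.min'_le i (Finset.mem_filter.2 ⟨Finset.mem_range.2 (by omega), hPi⟩)
        omega
      have heq : (f (i + 1)).1 = (f i).1 := not_not.1 hPi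
      have hset : (f i).1 = A1 := pre_set i (by omega)
      have hblock0 := nochange_blocked (hstep i (by omega)) heq
      have hblock := hblock0
      rw [hc3, hset] at hblock
      have hcast : ((1 + c : ℕ) : ZMod L) + 1 = ((2 + c : ℕ) : ZMod L) := by push_cast; ring
      rw [hcast] at hblock
      have h2c : 2 + c ≤ N := by
        have h2cL : 2 + c ≤ L := by omega
        have := (mem_nimg hL hsubA (by omega) h2cL).1 hblock
        rw [Finset.mem_Icc] at this
        omega
      have hjam := nochange_jam (hstep i (by omega)) hblock0
      rcases hjam with hmove | hmove
      · refine ⟨c + 1, by omega, by omega, ?_⟩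
        rw [hmove, hc3, hcast]
        congr 1
        omega
      · exact ⟨c, by omega, hc2, by rw [hmove, hc3]⟩
  -- T is at least N - 1
  have hTN : N - 1 ≤ T := by
    obtain ⟨c, hc1, hc2, hc3⟩ := pre_ptr T le_rfl
    have hsetT : (f T).1 = A1 := pre_set T le_rfl
    have hadv := change_adv (hstep T hTn) hTP
    have hnb : (f T).2 + 1 ∉ (f T).1 := hadv.2.1
    rw [hc3, hsetT] at hnb
    have hcast : ((1 + c : ℕ) : ZMod L) + 1 = ((2 + c : ℕ) : ZMod L) := by push_cast; ring
    rw [hcast] at hnb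
    by_contra hlt
    have h2c : 2 + c ≤ N := by omega
    exact hnb ((mem_nimg hL hsubA (by omega) (by omega)).2
      (Finset.mem_Icc.2 ⟨by omega, h2c⟩))
  -- suffix: the set is B1 after time S
  have suf_set : ∀ j, ∀ i, i ≤ n → n - i ≤ j → S < i → (f i).1 = B1 := by
    intro j
    induction j with
    | zero =>
      intro i hin hji hSi
      have : i = n := by omega
      rw [this, hfn1]
    | succ j ih =>
      intro i hin hji hSi
      by_cases hi : i = n
      · rw [hi, hfn1]
      · have h1 := ih (i + 1) (by omega) (by omega) (by omega)
        have hPi : ¬ P i := by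
          intro hPi
          have := chg.le_max' i (Finset.mem_filter.2 ⟨Finset.mem_range.2 (by omega), hPi⟩)
          omega
        have heq : (f (i + 1)).1 = (f i).1 := not_not.1 hPi
        rw [← heq]
        exact h1
  have suf_set' : ∀ i, S < i → i ≤ n → (f i).1 = B1 :=
    fun i h1 h2 => suf_set (n - i) i h2 le_rfl h1
  have hSet : (f (S + 1)).1 = B1 := suf_set' (S + 1) (by omega) (by omega)
  have hadvS := change_adv (hstep S hSn) hSP
  obtain ⟨hqmem, hqnmem, hd1, hd2⟩ := hadvS
  have hone : (1 : ZMod L) ≠ 0 := by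
    intro h10
    have h1L : ((1 : ℕ) : ZMod L) = ((L : ℕ) : ZMod L) := by
      rw [Nat.cast_one, h10, ZMod.natCast_self]
    have := castInj hL le_rfl (by omega) (by omega) le_rfl h1L
    omega
  have hq1B : (f S).2 + 1 ∈ B1 := by
    rw [← hSet, hd1]
    exact Finset.mem_insert_self _ _
  obtain ⟨mq, hmqB, hmq⟩ := Finset.mem_image.1 hq1B
  have hmqI := Finset.mem_Icc.1 hmqB
  have hqnotB : (f S).2 ∉ B1 := by
    rw [← hSet, hd1]
    intro hmem
    rcases Finset.mem_insert.1 hmem with h | h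
    · exact hone (left_eq_add.1 h)
    · exact (Finset.mem_erase.1 h).1 rfl
  have hmqval : mq = L - N + 1 := by
    by_contra hmqne
    have hqe : (f S).2 = ((mq - 1 : ℕ) : ZMod L) := by
      have hsplit : ((mq : ℕ) : ZMod L) = ((mq - 1 : ℕ) : ZMod L) + 1 := by
        conv_lhs => rw [show mq = (mq - 1) + 1 by omega]
        push_cast
        ring
      have h2 : (f S).2 + 1 = ((mq - 1 : ℕ) : ZMod L) + 1 := by
        rw [← hsplit, hmq]
      exact add_right_cancel h2
    apply hqnotB
    rw [hqe]
    exact (mem_nimg hL hsubB (by omega) (by omega)).2 (Finset.mem_Icc.2 ⟨by omega, by omega⟩)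
  have hq1 : (f S).2 + 1 = ((L - N + 1 : ℕ) : ZMod L) := by
    rw [← hmq, hmqval]
  -- the pointer just after move S is L - N + 1
  have hr : (f (S + 1)).2 = ((L - N + 1 : ℕ) : ZMod L) := by
    rcases hd2 with hcase | hcase
    · rw [hcase, hq1]
    · rw [hSet, hq1] at hcase
      obtain ⟨k, hk0, hrk, hrB, hmin⟩ := hcase
      have hsub : ∀ j : ℕ, j ≤ L - N + 1 →
          ((L - N + 1 : ℕ) : ZMod L) - ((j : ℕ) : ZMod L) = ((L - N + 1 - j : ℕ) : ZMod L) := by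
        intro j hj
        rw [eq_comm, Nat.cast_sub hj]
      have hnotB : ∀ j : ℕ, 1 ≤ j → j ≤ L - N → ((L - N + 1 - j : ℕ) : ZMod L) ∉ B1 := by
        intro j h1 h2 hmem
        have := (mem_nimg hL hsubB (by omega) (by omega)).1 hmem
        rw [Finset.mem_Icc] at this
        omega
      have hkbig : ¬ (k ≤ L - N) := by
        intro hk
        rw [hsub k (by omega)] at hrk
        exact hnotB k (by omega) hk (hrk ▸ hrB)
      have hkeq : k = L - N + 1 := by
        by_contra hk2
        have hmm := hmin (L - N + 1) (by omega) (by omega)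
        rw [hsub (L - N + 1) le_rfl] at hmm
        apply hmm
        have h0 : ((L - N + 1 - (L - N + 1) : ℕ) : ZMod L) = ((L : ℕ) : ZMod L) := by
          rw [Nat.sub_self, ZMod.natCast_self]
          simp
        rw [h0]
        exact (mem_nimg hL hsubB (by omega) le_rfl).2 (Finset.mem_Icc.2 ⟨by omega, le_rfl⟩)
      rw [hkeq, hsub _ le_rfl, Nat.sub_self] at hrk
      exfalso
      by_cases hSn2 : S + 1 < n
      · have hset2 : (f (S + 1 + 1)).1 = B1 := suf_set' (S + 1 + 1) (by omega) (by omega)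
        have heq12 : (f (S + 1 + 1)).1 = (f (S + 1)).1 := by rw [hset2, hSet]
        have hblock := nochange_blocked (hstep (S + 1) hSn2) heq12
        rw [hrk] at hblock
        have h01 : ((0 : ℕ) : ZMod L) + 1 = ((1 : ℕ) : ZMod L) := by push_cast; ring
        rw [h01, hSet] at hblock
        have := (mem_nimg hL hsubB le_rfl (by omega)).1 hblock
        rw [Finset.mem_Icc] at this
        omega
      · have hSn3 : S + 1 = n := by omega
        rw [hSn3, hfn2] at hrk
        have h0L : ((L - 1 : ℕ) : ZMod L) = ((L : ℕ) : ZMod L) := by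
          rw [hrk, Nat.cast_zero, ZMod.natCast_self]
        have := castInj hL (by omega) (by omega) (by omega) le_rfl h0L
        omega
  -- suffix pointer walk
  have suf_ptr : ∀ i, S + 1 ≤ i → i ≤ n →
      ∃ e, e ≤ i - (S + 1) ∧ L - N + 1 + e ≤ L ∧ (f i).2 = ((L - N + 1 + e : ℕ) : ZMod L) := by
    intro i
    induction i with
    | zero => intro h1 h2; omega
    | succ i ih =>
      intro h1 h2
      by_cases hbase : i < S + 1
      · have hieq : i + 1 = S + 1 := by omega
        refine ⟨0, by omega, by omega, ?_⟩
        rw [hieq, hr]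
      · obtain ⟨e, he1, he2, he3⟩ := ih (by omega) (by omega)
        have hseti : (f i).1 = B1 := suf_set' i (by omega) (by omega)
        have hseti1 : (f (i + 1)).1 = B1 := suf_set' (i + 1) (by omega) (by omega)
        have heqi : (f (i + 1)).1 = (f i).1 := by rw [hseti, hseti1]
        have hblock0 := nochange_blocked (hstep i (by omega)) heqi
        have hblock := hblock0
        rw [he3, hseti] at hblock
        have heL : L - N + 1 + e < L := by
          rcases eq_or_lt_of_le he2 with hE | hE
          · exfalso
            have h0 : ((L - N + 1 + e : ℕ) : ZMod L) = 0 := by rw [hE, ZMod.natCast_self]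
            rw [h0] at hblock
            have h01 : (0 : ZMod L) + 1 = ((1 : ℕ) : ZMod L) := by push_cast; ring
            rw [h01] at hblock
            have := (mem_nimg hL hsubB le_rfl (by omega)).1 hblock
            rw [Finset.mem_Icc] at this
            omega
          · exact hE
        have hcast : ((L - N + 1 + e : ℕ) : ZMod L) + 1 = ((L - N + 1 + (e + 1) : ℕ) : ZMod L) := by
          push_cast; ring
        have hjam := nochange_jam (hstep i (by omega)) hblock0
        rcases hjam with hmove | hmove
        · exact ⟨e + 1, by omega, by omega, by rw [hmove, he3, hcast]⟩
        · exact ⟨e, by omega, by omega, by rw [hmove, he3]⟩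
  have hSend : N - 2 ≤ n - (S + 1) := by
    obtain ⟨e, he1, he2, he3⟩ := suf_ptr n (by omega) le_rfl
    rw [hfn2] at he3
    have := castInj hL (by omega) (by omega) (by omega) he2 he3
    omega
  -- final counting
  have hdisj1 : Disjoint (Finset.range T) chg := by
    rw [Finset.disjoint_left]
    intro i hi hic
    have := chg.min'_le i hic
    rw [Finset.mem_range] at hi
    omega
  have hdisj2 : Disjoint (Finset.Icc (S + 1) (n - 1)) chg := by
    rw [Finset.disjoint_left]
    intro i hi hic
    have := chg.le_max' i hic
    rw [Finset.mem_Icc] at hi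
    omega
  have hdisj3 : Disjoint (Finset.range T) (Finset.Icc (S + 1) (n - 1)) := by
    rw [Finset.disjoint_left]
    intro i hi hic
    rw [Finset.mem_range] at hi
    rw [Finset.mem_Icc] at hic
    omega
  have hsubu : (Finset.range T ∪ Finset.Icc (S + 1) (n - 1)) ∪ chg ⊆ Finset.range n := by
    intro i hi
    rw [Finset.mem_range]
    rcases Finset.mem_union.1 hi with h | h
    · rcases Finset.mem_union.1 h with h2 | h2
      · rw [Finset.mem_range] at h2; omega
      · rw [Finset.mem_Icc] at h2; omega
    · have := Finset.mem_range.1 (Finset.mem_filter.1 h).1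
      omega
  have hcard := Finset.card_le_card hsubu
  rw [Finset.card_union_of_disjoint (Finset.disjoint_union_left.2 ⟨hdisj1, hdisj2⟩),
    Finset.card_union_of_disjoint hdisj3, Finset.card_range, Nat.card_Icc,
    Finset.card_range] at hcard
  generalize hPP : N * (L - N) = PP at *
  omega

end Lower


/-- the lifted-TASEP distance from `A` (particles at `1,…,N`,
pointer at site `1`) to `B` (particles at `L-N+1,…,L`, pointer at site `L-1`)
equals `N(L-N) + 2N - 3`. -/
theorem lifted_dist_A_B (N L : ℕ) (hN : 1 < N) (hNL : N < L) :
    gdist (LStep (L := L))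
        (((Finset.range N).image fun j => ((j + 1 : ℕ) : ZMod L)),
          ((1 : ℕ) : ZMod L))
        (((Finset.range N).image fun j => ((L - N + 1 + j : ℕ) : ZMod L)),
          ((L - 1 : ℕ) : ZMod L)) =
      N * (L - N) + 2 * N - 3 := by
  have hAset : ((Finset.range N).image fun j => ((j + 1 : ℕ) : ZMod L))
      = nimg L (Finset.Icc 1 N) := by
    rw [nimg, show Finset.Icc 1 N = (Finset.range N).image (fun j => j + 1) by
      ext m
      simp only [Finset.mem_Icc, Finset.mem_image, Finset.mem_range]
      constructor
      · intro h; exact ⟨m - 1, by omega, by omega⟩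
      · rintro ⟨j, hj, rfl⟩; omega,
      Finset.image_image]
    rfl
  have hBset : ((Finset.range N).image fun j => ((L - N + 1 + j : ℕ) : ZMod L))
      = nimg L (Finset.Icc (L - N + 1) L) := by
    rw [nimg, show Finset.Icc (L - N + 1) L = (Finset.range N).image (fun j => L - N + 1 + j) by
      ext m
      simp only [Finset.mem_Icc, Finset.mem_image, Finset.mem_range]
      constructor
      · intro h; exact ⟨m - (L - N + 1), by omega, by omega⟩
      · rintro ⟨j, hj, rfl⟩; omega,
      Finset.image_image]
    rfl
  rw [hAset, hBset, gdist]
  apply le_antisymm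
  · exact Nat.sInf_le (upper hN hNL)
  · exact le_csInf ⟨_, upper hN hNL⟩ fun b hb => lower hN hNL hb

end Paper
end
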